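/- arXiv:1503.01346 — 5 statements merged into one kernel-verified Lean document; each statement's English description precedes it below -/
import Mathlib

section
/- Let n be a positive natural number and let Δ : Mₙ(ℂ) → Mₙ(ℂ) be a weak-2-local *-derivation on the C*-algebra Mₙ(ℂ) of n×n complex matrices. Then Δ is a ℂ-linear map and a derivation, i.e. Δ(x + y) = Δ(x) + Δ(y), Δ(λx) = λΔ(x) and Δ(xy) = Δ(x)y + xΔ(y) for all x, y ∈ Mₙ(ℂ) and λ ∈ ℂ. -/
open scoped Matrix.Norms.L2Operator

/-- A (not necessarily linear) map `Δ` on `Mₙ(ℂ)` is a weak-2-local *-derivation if for all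
`a b` and every continuous linear functional `φ` there is a *-derivation `D` (bundled as a
`ℂ`-linear map satisfying the Leibniz rule and commuting with the involution) such that
`φ (Δ a) = φ (D a)` and `φ (Δ b) = φ (D b)`. -/
def IsWeak2LocalStarDerivation {n : ℕ} (Δ : Matrix (Fin n) (Fin n) ℂ → Matrix (Fin n) (Fin n) ℂ) :
    Prop :=
  ∀ (a b : Matrix (Fin n) (Fin n) ℂ) (φ : Matrix (Fin n) (Fin n) ℂ →L[ℂ] ℂ),
    ∃ D : Matrix (Fin n) (Fin n) ℂ →ₗ[ℂ] Matrix (Fin n) (Fin n) ℂ,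
      (∀ x y, D (x * y) = D x * y + x * D y) ∧
      (∀ x, D (star x) = star (D x)) ∧
      φ (Δ a) = φ (D a) ∧ φ (Δ b) = φ (D b)


open Complex

section Aux

variable {n : ℕ}




lemma lemA {K : Submodule ℝ (Matrix (Fin n) (Fin n) ℂ)} {x : Matrix (Fin n) (Fin n) ℂ}
    (h : ∀ φ : Matrix (Fin n) (Fin n) ℂ →L[ℂ] ℂ, ∃ k ∈ K, φ x = φ k) : x ∈ K := by
  by_contra hx
  have hq : (Submodule.Quotient.mk x : (Matrix (Fin n) (Fin n) ℂ) ⧸ K) ≠ 0 := by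
    simpa [Submodule.Quotient.mk_eq_zero] using hx
  obtain ⟨f, hf⟩ : ∃ f : Module.Dual ℝ ((Matrix (Fin n) (Fin n) ℂ) ⧸ K),
      f (Submodule.Quotient.mk x) ≠ 0 := by
    by_contra hno
    push_neg at hno
    exact hq ((Module.forall_dual_apply_eq_zero_iff ℝ _).mp hno)
  set g : Matrix (Fin n) (Fin n) ℂ →ₗ[ℝ] ℝ := f.comp K.mkQ with hg
  have hgK : ∀ k ∈ K, g k = 0 := by
    intro k hk
    simp [hg, (Submodule.Quotient.mk_eq_zero K).mpr hk, Submodule.mkQ_apply]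
  have hsmulC : ∀ (z : Matrix (Fin n) (Fin n) ℂ) (r : ℝ), g ((r : ℂ) • z) = r * g z := by
    intro z r
    rw [show ((r : ℂ) • z) = r • z from by simp [Matrix.ext_iff.symm, Complex.real_smul]]
    exact map_smul g r z
  have hII : ∀ z : Matrix (Fin n) (Fin n) ℂ, I • I • z = -z := by
    intro z; rw [smul_smul, I_mul_I, neg_one_smul]
  have hgc : ∀ (c : ℂ) (z : Matrix (Fin n) (Fin n) ℂ),
      g (c • z) = c.re * g z + c.im * g (I • z) := by
    intro c z
    have : c • z = (c.re : ℂ) • z + (c.im : ℂ) • (I • z) := by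
      rw [smul_smul, ← add_smul]
      congr 1
      simp [Complex.ext_iff]
    rw [this, map_add, hsmulC, hsmulC]
  -- the ℂ-linear functional
  let φ₀ : Matrix (Fin n) (Fin n) ℂ →ₗ[ℂ] ℂ :=
    { toFun := fun z => (g z : ℂ) - (g (I • z) : ℂ) * I
      map_add' := by
        intro z w
        push_cast [smul_add, map_add]
        ring
      map_smul' := by
        intro c z
        have h1 : g (c • z) = c.re * g z + c.im * g (I • z) := hgc c z
        have h2 : g (I • c • z) = c.re * g (I • z) - c.im * g z := by
          rw [smul_comm I c, hgc c (I • z), hII, map_neg]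
          ring
        simp only [RingHom.id_apply, h1, h2]
        rw [Complex.ext_iff]
        constructor <;> simp <;> ring
      }
  have hRe : ∀ z, ((φ₀ z).re : ℝ) = g z := by
    intro z
    simp [φ₀]
  obtain ⟨k, hk, he⟩ := h (LinearMap.toContinuousLinearMap φ₀)
  have : g x = g k := by
    have : φ₀ x = φ₀ k := by simpa using he
    rw [← hRe, ← hRe, this]
  rw [hgK k hk] at this
  exact hf (by simpa [hg] using this)




def IsD (D : Matrix (Fin n) (Fin n) ℂ →ₗ[ℂ] Matrix (Fin n) (Fin n) ℂ) : Prop :=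
  (∀ x y, D (x * y) = D x * y + x * D y) ∧ ∀ x, D (star x) = star (D x)

lemma IsD.zero : IsD (0 : Matrix (Fin n) (Fin n) ℂ →ₗ[ℂ] Matrix (Fin n) (Fin n) ℂ) := by
  constructor <;> intros <;> simp

lemma IsD.add {D E} (hD : IsD (n := n) D) (hE : IsD E) : IsD (D + E) := by
  constructor
  · intro x y
    simp only [LinearMap.add_apply, hD.1 x y, hE.1 x y]
    noncomm_ring
  · intro x
    simp [LinearMap.add_apply, hD.2 x, hE.2 x, star_add]

lemma IsD.smul (c : ℝ) {D} (hD : IsD (n := n) D) : IsD ((c : ℂ) • D) := by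
  constructor
  · intro x y
    simp only [LinearMap.smul_apply, hD.1 x y, smul_add, smul_mul_assoc, mul_smul_comm]
  · intro x
    simp [LinearMap.smul_apply, hD.2 x, star_smul]

/-- the set of values of star-derivations at `c`, as a real submodule -/
noncomputable def Kc (c : Matrix (Fin n) (Fin n) ℂ) : Submodule ℝ (Matrix (Fin n) (Fin n) ℂ) where
  carrier := {z | ∃ D, IsD D ∧ D c = z}
  zero_mem' := ⟨0, IsD.zero, rfl⟩
  add_mem' := by
    rintro z w ⟨D, hD, rfl⟩ ⟨E, hE, rfl⟩
    exact ⟨D + E, hD.add hE, rfl⟩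
  smul_mem' := by
    rintro r z ⟨D, hD, rfl⟩
    refine ⟨(r : ℂ) • D, hD.smul r, ?_⟩
    simp [Matrix.ext_iff.symm, Complex.real_smul]

/-- the set of values `D x * x + x * D x + I • D x`, as a real submodule -/
noncomputable def KJ (x : Matrix (Fin n) (Fin n) ℂ) : Submodule ℝ (Matrix (Fin n) (Fin n) ℂ) where
  carrier := {z | ∃ D, IsD D ∧ D x * x + x * D x + I • D x = z}
  zero_mem' := ⟨0, IsD.zero, by simp⟩
  add_mem' := by
    rintro z w ⟨D, hD, rfl⟩ ⟨E, hE, rfl⟩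
    refine ⟨D + E, hD.add hE, ?_⟩
    simp only [LinearMap.add_apply]
    rw [add_mul, mul_add, smul_add]
    abel
  smul_mem' := by
    rintro r z ⟨D, hD, rfl⟩
    refine ⟨(r : ℂ) • D, hD.smul r, ?_⟩
    simp only [LinearMap.smul_apply, smul_mul_assoc, mul_smul_comm, smul_add]
    rw [smul_comm I ((r:ℂ))]
    simp [Matrix.ext_iff.symm, Complex.real_smul, smul_add]

lemma Kc_sa {c : Matrix (Fin n) (Fin n) ℂ} (hc : star c = c)
    {z : Matrix (Fin n) (Fin n) ℂ} (hz : z ∈ Kc c) : star z = z := by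
  obtain ⟨D, hD, rfl⟩ := hz
  rw [← hD.2 c, hc]

section
variable {Δ : Matrix (Fin n) (Fin n) ℂ → Matrix (Fin n) (Fin n) ℂ}
  (hΔ : IsWeak2LocalStarDerivation Δ)

include hΔ

lemma hom (c : ℂ) (x : Matrix (Fin n) (Fin n) ℂ) : Δ (c • x) = c • Δ x := by
  have hmem : Δ (c • x) - c • Δ x ∈ (⊥ : Submodule ℝ (Matrix (Fin n) (Fin n) ℂ)) := by
    apply lemA
    intro φ
    obtain ⟨D, hD1, hD2, ha, hb⟩ := hΔ (c • x) x φ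
    refine ⟨0, Submodule.zero_mem _, ?_⟩
    rw [map_sub, ha, map_smul D, map_smul φ, map_smul φ, hb, sub_self, map_zero]
  simpa [sub_eq_zero] using hmem

lemma pair (a b : Matrix (Fin n) (Fin n) ℂ) (κ : ℂ) :
    Δ a + κ • Δ b ∈ Kc (a + κ • b) := by
  apply lemA
  intro φ
  obtain ⟨D, hD1, hD2, ha, hb⟩ := hΔ a b φ
  refine ⟨D (a + κ • b), ⟨D, ⟨hD1, hD2⟩, rfl⟩, ?_⟩
  simp [ha, hb]

lemma point (c : Matrix (Fin n) (Fin n) ℂ) : Δ c ∈ Kc c := by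
  have := pair hΔ c c 0
  simpa using this

lemma pencil (a b : Matrix (Fin n) (Fin n) ℂ) (κ : ℂ) :
    Δ (a + b) - Δ a - Δ b ∈ Kc (a + κ • b) := by
  have h1 := pair hΔ (a + b) b (κ - 1)
  have h2 := pair hΔ a b κ
  rw [show (a + b) + (κ - 1) • b = a + κ • b by module] at h1
  have h3 := Submodule.sub_mem _ h1 h2
  rw [show (Δ (a + b) + (κ - 1) • Δ b) - (Δ a + κ • Δ b)
      = Δ (a+b) - Δ a - Δ b by module] at h3
  exact h3

lemma addIm (u v : Matrix (Fin n) (Fin n) ℂ) (hu : star u = u) (hv : star v = v) :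
    Δ (u + I • v) = Δ u + I • Δ v := by
  set Φ := Δ (u + I • v) - Δ u - Δ (I • v) with hΦ
  have h1 : Φ ∈ Kc u := by
    have := pencil hΔ u (I • v) 0
    simpa using this
  have h2 : Φ ∈ Kc (I • v) := by
    have := pencil hΔ (I • v) u 0
    simp only [zero_smul, add_zero] at this
    rw [add_comm (I • v) u] at this
    rw [show Δ (u + I • v) - Δ (I • v) - Δ u = Φ by rw [hΦ]; abel] at this
    exact this
  have hsa : star Φ = Φ := Kc_sa hu h1
  obtain ⟨D, hD, hDc⟩ := h2
  have hw : star (D v) = D v := by rw [← hD.2 v, hv]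
  have hΦI : Φ = I • D v := by rw [← hDc, map_smul]
  have hneg : I • D v = -(I • D v) := by
    conv_lhs => rw [← hΦI, ← hsa, hΦI]
    rw [star_smul, hw]
    simp
  have h0 : I • D v + I • D v = 0 := by
    nth_rewrite 2 [hneg]
    simp
  have hDv : I • D v = 0 := by
    have h2' : (2 : ℂ) • (I • D v) = 0 := by rw [two_smul]; exact h0
    simpa using smul_eq_zero.mp h2'
  have hΦ0 : Φ = 0 := by rw [hΦI, hDv]
  have := sub_eq_zero.mp (by rw [← hΦ0, hΦ]; abel : Δ (u + I • v) - (Δ u + Δ (I • v)) = 0)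
  rw [this, hom hΔ I v]

lemma addSA (u v : Matrix (Fin n) (Fin n) ℂ) (hu : star u = u) (hv : star v = v) :
    Δ (u + v) = Δ u + Δ v := by
  set Φ := Δ (u + v) - Δ u - Δ v with hΦdef
  have hΦv : Φ ∈ Kc v := by
    have := pencil hΔ v u 0
    simp only [zero_smul, add_zero] at this
    rw [add_comm v u] at this
    rw [show Δ (u + v) - Δ v - Δ u = Φ by rw [hΦdef]; abel] at this
    exact this
  have hsaΦ : star Φ = Φ := Kc_sa hv hΦv
  have hx := addIm hΔ u v hu hv
  have hy := addIm hΔ v u hv hu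
  have harg : (u + I • v) + I • (v + I • u) = ((2:ℂ) * I) • v := by
    match_scalars
    · linear_combination I_sq
    · ring
  have harg2 : (u + I • v) + (v + I • u) = (1 + I) • (u + v) := by module
  have hmem := pencil hΔ (u + I • v) (v + I • u) I
  rw [harg] at hmem
  rw [harg2, hom hΔ (1 + I) (u + v), hx, hy] at hmem
  rw [show (1 + I) • Δ (u + v) - (Δ u + I • Δ v) - (Δ v + I • Δ u) = (1 + I) • Φ by
    rw [hΦdef]; module] at hmem
  obtain ⟨D, hD, hDc⟩ := hmem
  have hw : star (D v) = D v := by rw [← hD.2 v, hv]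
  have e1 : (1 + I) • Φ = ((2:ℂ) * I) • D v := by rw [← hDc, map_smul]
  have e2 : (1 - I) • Φ = -(((2:ℂ) * I) • D v) := by
    have := congrArg star e1
    rw [star_smul, hsaΦ, star_smul, hw] at this
    simpa [sub_eq_add_neg] using this
  have h2Φ : (2 : ℂ) • Φ = 0 := by
    have h3 := congrArg₂ (· + ·) e1 e2
    rw [← add_smul, add_neg_cancel] at h3
    rw [show (1 + I) + (1 - I) = (2:ℂ) by ring] at h3
    exact h3
  have hΦ0 : Φ = 0 := by simpa using smul_eq_zero.mp h2Φ
  exact sub_eq_zero.mp (by rw [← hΦ0, hΦdef]; abel : Δ (u + v) - (Δ u + Δ v) = 0)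

end

section
variable {Δ : Matrix (Fin n) (Fin n) ℂ → Matrix (Fin n) (Fin n) ℂ}
  (hΔ : IsWeak2LocalStarDerivation Δ)

include hΔ

lemma hadd (x y : Matrix (Fin n) (Fin n) ℂ) : Δ (x + y) = Δ x + Δ y := by
  have sa1 : ∀ z : Matrix (Fin n) (Fin n) ℂ, star (((1:ℂ)/2) • (z + star z)) = ((1:ℂ)/2) • (z + star z) := by
    intro z
    rw [star_smul, star_add, star_star]
    rw [show star ((1:ℂ)/2) = (1:ℂ)/2 by simp]
    rw [add_comm]
  have sa2 : ∀ z : Matrix (Fin n) (Fin n) ℂ, star ((-(1/2) * I : ℂ) • (z - star z)) = (-(1/2) * I : ℂ) • (z - star z) := by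
    intro z
    rw [star_smul, star_sub, star_star]
    rw [show star (-(1/2) * I : ℂ) = ((1/2) * I : ℂ) by simp]
    match_scalars <;> ring
  have dec : ∀ z : Matrix (Fin n) (Fin n) ℂ,
      z = ((1:ℂ)/2) • (z + star z) + I • ((-(1/2) * I : ℂ) • (z - star z)) := by
    intro z
    match_scalars
    · linear_combination ((1/2) : ℂ) * I_sq
    · linear_combination (-(1/2) : ℂ) * I_sq
  set u1 := ((1:ℂ)/2) • (x + star x)
  set v1 := (-(1/2) * I : ℂ) • (x - star x)
  set u2 := ((1:ℂ)/2) • (y + star y)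
  set v2 := (-(1/2) * I : ℂ) • (y - star y)
  have hxd : x = u1 + I • v1 := dec x
  have hyd : y = u2 + I • v2 := dec y
  have hu1 : star u1 = u1 := sa1 x
  have hu2 : star u2 = u2 := sa1 y
  have hv1 : star v1 = v1 := sa2 x
  have hv2 : star v2 = v2 := sa2 y
  have hxy : x + y = (u1 + u2) + I • (v1 + v2) := by rw [hxd, hyd]; module
  calc Δ (x + y) = Δ ((u1 + u2) + I • (v1 + v2)) := by rw [← hxy]
    _ = Δ (u1 + u2) + I • Δ (v1 + v2) := addIm hΔ _ _ (by rw [star_add, hu1, hu2]) (by rw [star_add, hv1, hv2])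
    _ = (Δ u1 + Δ u2) + I • (Δ v1 + Δ v2) := by rw [addSA hΔ _ _ hu1 hu2, addSA hΔ _ _ hv1 hv2]
    _ = (Δ u1 + I • Δ v1) + (Δ u2 + I • Δ v2) := by module
    _ = Δ x + Δ y := by rw [← addIm hΔ _ _ hu1 hv1, ← addIm hΔ _ _ hu2 hv2, ← hxd, ← hyd]

/-- Jordan square rule on self-adjoint elements -/
lemma jsq (x : Matrix (Fin n) (Fin n) ℂ) (hx : star x = x) :
    Δ (x * x) = Δ x * x + x * Δ x := by
  have hmem : Δ (x * x) + I • Δ x ∈ KJ x := by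
    apply lemA
    intro φ
    obtain ⟨D, hD1, hD2, ha, hb⟩ := hΔ (x * x) x φ
    refine ⟨D x * x + x * D x + I • D x, ⟨D, ⟨hD1, hD2⟩, rfl⟩, ?_⟩
    have : φ (D (x * x)) = φ (D x * x + x * D x) := by rw [hD1 x x]
    simp [ha, hb, this]
  obtain ⟨D, hD, hDval⟩ := hmem
  set w := D x with hwdef
  have hw : star w = w := by rw [hwdef, ← hD.2 x, hx]
  have hsq : star (Δ (x * x)) = Δ (x * x) := by
    refine Kc_sa ?_ (point hΔ (x * x))
    rw [star_mul, hx]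
  have hdx : star (Δ x) = Δ x := Kc_sa hx (point hΔ x)
  have key : Δ (x * x) - (w * x + x * w) = I • (w - Δ x) := by
    calc Δ (x * x) - (w * x + x * w)
        = (Δ (x * x) + I • Δ x) - (w * x + x * w) - I • Δ x := by module
      _ = (w * x + x * w + I • w) - (w * x + x * w) - I • Δ x := by rw [hDval.symm]
      _ = I • (w - Δ x) := by module
  have hsaL : star (Δ (x * x) - (w * x + x * w)) = Δ (x * x) - (w * x + x * w) := by
    rw [star_sub, star_add, star_mul, star_mul, hx, hw, hsq, add_comm (x * w)]
  have hneg : I • (w - Δ x) = -(I • (w - Δ x)) := by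
    conv_lhs => rw [← key, ← hsaL, key]
    rw [star_smul, star_sub, hw, hdx]
    simp
  have h0 : I • (w - Δ x) + I • (w - Δ x) = 0 := by
    nth_rewrite 2 [hneg]; simp
  have hz : I • (w - Δ x) = 0 := by
    have h2' : (2 : ℂ) • (I • (w - Δ x)) = 0 := by rw [two_smul]; exact h0
    simpa using smul_eq_zero.mp h2'
  have hwx : w = Δ x := by
    have := smul_eq_zero.mp hz
    simp only [I_ne_zero, false_or] at this
    exact sub_eq_zero.mp this
  rw [hwx] at key
  rw [sub_self, smul_zero] at key
  exact sub_eq_zero.mp key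

end

lemma decomp_sa1 (z : Matrix (Fin n) (Fin n) ℂ) :
    star (((1:ℂ)/2) • (z + star z)) = ((1:ℂ)/2) • (z + star z) := by
  rw [star_smul, star_add, star_star]
  rw [show star ((1:ℂ)/2) = (1:ℂ)/2 by simp]
  rw [add_comm]

lemma decomp_sa2 (z : Matrix (Fin n) (Fin n) ℂ) :
    star ((-(1/2) * Complex.I : ℂ) • (z - star z)) = (-(1/2) * Complex.I : ℂ) • (z - star z) := by
  rw [star_smul, star_sub, star_star]
  rw [show star (-(1/2) * Complex.I : ℂ) = ((1/2) * Complex.I : ℂ) by simp]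
  match_scalars <;> ring

lemma decomp_eq (z : Matrix (Fin n) (Fin n) ℂ) :
    z = ((1:ℂ)/2) • (z + star z)
      + Complex.I • ((-(1/2) * Complex.I : ℂ) • (z - star z)) := by
  match_scalars
  · linear_combination ((1/2) : ℂ) * Complex.I_sq
  · linear_combination (-(1/2) : ℂ) * Complex.I_sq

section
variable {Δ : Matrix (Fin n) (Fin n) ℂ → Matrix (Fin n) (Fin n) ℂ}
  (hΔ : IsWeak2LocalStarDerivation Δ)

include hΔ

lemma H2 (x y : Matrix (Fin n) (Fin n) ℂ) :
    Δ (x * y + y * x) = Δ x * y + x * Δ y + Δ y * x + y * Δ x := by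
  set J : Matrix (Fin n) (Fin n) ℂ → Matrix (Fin n) (Fin n) ℂ → Matrix (Fin n) (Fin n) ℂ :=
    fun a b => Δ (a * b + b * a) - Δ a * b - a * Δ b - Δ b * a - b * Δ a with hJdef
  have hJz : ∀ z, star z = z → J z z = 0 := by
    intro z hz
    simp only [hJdef]
    rw [show z * z + z * z = (z*z) + (z*z) from rfl, hadd hΔ, jsq hΔ z hz]
    abel
  have hJsym : ∀ a b, J a b = J b a := by
    intro a b
    simp only [hJdef]
    rw [add_comm (a*b) (b*a)]
    abel
  have hJaddR : ∀ a b c, J a (b + c) = J a b + J a c := by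
    intro a b c
    simp only [hJdef]
    rw [show a * (b + c) + (b + c) * a = (a*b + b*a) + (a*c + c*a) by noncomm_ring,
      hadd hΔ, hadd hΔ b c]
    noncomm_ring
  have hJsmulR : ∀ (c : ℂ) a b, J a (c • b) = c • J a b := by
    intro c a b
    simp only [hJdef]
    rw [show a * (c • b) + (c • b) * a = c • (a*b + b*a) by
      rw [mul_smul_comm, smul_mul_assoc, smul_add],
      hom hΔ, hom hΔ]
    rw [mul_smul_comm, smul_mul_assoc, mul_smul_comm, smul_mul_assoc]
    module
  have hJaddL : ∀ a b c, J (a + b) c = J a c + J b c := by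
    intro a b c
    rw [hJsym, hJaddR, hJsym c a, hJsym c b]
  have hJsmulL : ∀ (c : ℂ) a b, J (c • a) b = c • J a b := by
    intro c a b
    rw [hJsym, hJsmulR, hJsym b a]
  have hJsa : ∀ u v, star u = u → star v = v → J u v = 0 := by
    intro u v hu hv
    have h0 : J (u + v) (u + v) = 0 := hJz _ (by rw [star_add, hu, hv])
    rw [hJaddL, hJaddR, hJaddR, hJz u hu, hJz v hv, hJsym v u] at h0
    have h1 : J u v + J u v = 0 := by
      rw [show J u v + J u v = 0 + J u v + (J u v + 0) by abel]
      exact h0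
    have h2' : (2:ℂ) • J u v = 0 := by rw [two_smul]; exact h1
    simpa using smul_eq_zero.mp h2'
  have main : ∀ p q r s : Matrix (Fin n) (Fin n) ℂ, star p = p → star q = q →
      star r = r → star s = s → J (p + Complex.I • q) (r + Complex.I • s) = 0 := by
    intro p q r s hp hq hr hs
    rw [hJaddL, hJsmulL, hJaddR, hJaddR, hJsmulR, hJsmulR]
    rw [hJsa p r hp hr, hJsa p s hp hs, hJsa q r hq hr, hJsa q s hq hs]
    simp
  have hJ0 : J x y = 0 := by
    rw [decomp_eq x, decomp_eq y]
    exact main _ _ _ _ (decomp_sa1 x) (decomp_sa2 x) (decomp_sa1 y) (decomp_sa2 y)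
  simp only [hJdef] at hJ0
  have := sub_eq_zero.mp (by rw [← hJ0]; abel :
    Δ (x * y + y * x) - (Δ x * y + x * Δ y + Δ y * x + y * Δ x) = 0)
  exact this

end

section Herstein

variable {d : Matrix (Fin n) (Fin n) ℂ → Matrix (Fin n) (Fin n) ℂ}
  (hadd' : ∀ x y, d (x + y) = d x + d y)
  (hH2' : ∀ x y, d (x * y + y * x) = d x * y + x * d y + d y * x + y * d x)

lemma cancel_two' {u v : Matrix (Fin n) (Fin n) ℂ} (h : u + u = v + v) : u = v := by
  have h2 : (2 : ℂ) • u = (2 : ℂ) • v := by rw [two_smul, two_smul]; exact h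
  exact smul_right_injective (Matrix (Fin n) (Fin n) ℂ) (two_ne_zero : (2:ℂ) ≠ 0) h2

include hadd' hH2'

lemma hersq (x : Matrix (Fin n) (Fin n) ℂ) : d (x * x) = d x * x + x * d x := by
  have h := hH2' x x
  rw [hadd'] at h
  refine cancel_two' ?_
  rw [h]
  abel

lemma herL1 (a b : Matrix (Fin n) (Fin n) ℂ) :
    d (a * b * a) = d a * (b * a) + a * d b * a + a * b * d a := by
  have e0 := hH2' a b
  have e3 := hersq hadd' hH2' a
  have e1 := hH2' a (a * b + b * a)
  have e2 := hH2' (a * a) b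
  simp only [hadd'] at e0 e1 e2
  have hx : a * (a * b + b * a) + (a * b + b * a) * a
      = (a * a * b + b * (a * a)) + (a * b * a + a * b * a) := by noncomm_ring
  have eX := congrArg d hx
  simp only [hadd'] at eX
  rw [e1, e2, e3] at eX
  refine cancel_two' ?_
  have hC := eq_sub_of_add_eq' eX.symm
  rw [hC, e0]
  noncomm_ring
  done

lemma herL2 (a b c : Matrix (Fin n) (Fin n) ℂ) :
    d (a * b * c + c * b * a) = d a * (b * c) + a * d b * c + a * b * d c
      + d c * (b * a) + c * d b * a + c * b * d a := by
  have h := herL1 hadd' hH2' (a + c) b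
  simp only [hadd'] at h
  have hx : (a + c) * b * (a + c) = (a * b * a + c * b * c) + (a * b * c + c * b * a) := by
    noncomm_ring
  have eX := congrArg d hx
  simp only [hadd'] at eX
  rw [h, herL1 hadd' hH2' a b, herL1 hadd' hH2' c b] at eX
  have hC := eq_sub_of_add_eq' eX.symm
  simp only [hadd']
  rw [hC]
  noncomm_ring

lemma herH5 (a b x : Matrix (Fin n) (Fin n) ℂ) :
    (d (a * b) - d a * b - a * d b) * x * (a * b - b * a)
      + (a * b - b * a) * x * (d (a * b) - d a * b - a * d b) = 0 := by
  have hQ : d (b * a) = (d a * b + a * d b + d b * a + b * d a) - d (a * b) := by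
    have h := hH2' a b
    rw [hadd'] at h
    exact eq_sub_of_add_eq' h
  have e1 := herL2 hadd' hH2' (a * b) x (b * a)
  simp only [hadd'] at e1
  have hx : a * b * x * (b * a) + b * a * x * (a * b)
      = a * (b * x * b) * a + b * (a * x * a) * b := by noncomm_ring
  have e2 := congrArg d hx
  simp only [hadd'] at e2
  rw [herL1 hadd' hH2' a (b * x * b), herL1 hadd' hH2' b (a * x * a),
    herL1 hadd' hH2' b x, herL1 hadd' hH2' a x] at e2
  have eW := e1.symm.trans e2
  rw [hQ] at eW
  have h0 := sub_eq_zero_of_eq eW.symm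
  rw [← h0]
  noncomm_ring

end Herstein

lemma sandwich (A B : Matrix (Fin n) (Fin n) ℂ) (j k i l : Fin n) :
    (A * Matrix.single j k (1:ℂ) * B) i l = A i j * B k l := by
  rw [Matrix.mul_assoc, Matrix.mul_apply]
  rw [Finset.sum_eq_single j]
  · rw [Matrix.single_mul_apply_same, one_mul]
  · intro m _ hm
    rw [Matrix.single_mul_apply_of_ne (h := hm), mul_zero]
  · intro h
    exact absurd (Finset.mem_univ j) h

section Herstein2

variable {d : Matrix (Fin n) (Fin n) ℂ → Matrix (Fin n) (Fin n) ℂ}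
  (hadd' : ∀ x y, d (x + y) = d x + d y)
  (hsmul' : ∀ (c : ℂ) x, d (c • x) = c • d x)
  (hH2' : ∀ x y, d (x * y + y * x) = d x * y + x * d y + d y * x + y * d x)

include hadd' hH2'

lemma herOr (a b : Matrix (Fin n) (Fin n) ℂ) :
    d (a * b) - d a * b - a * d b = 0 ∨ a * b = b * a := by
  by_cases hq : a * b = b * a
  · exact Or.inr hq
  refine Or.inl ?_
  have hq0 : a * b - b * a ≠ 0 := sub_ne_zero.mpr hq
  have hent : ∀ i j k l : Fin n,
      (d (a*b) - d a * b - a * d b) i j * (a*b - b*a) k l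
        + (a*b - b*a) i j * (d (a*b) - d a * b - a * d b) k l = 0 := by
    intro i j k l
    have h5 := herH5 hadd' hH2' a b (Matrix.single j k 1)
    have h6 := Matrix.ext_iff.mpr h5 i l
    simpa [Matrix.add_apply, sandwich] using h6
  have hdiag : ∀ k l : Fin n,
      (d (a*b) - d a * b - a * d b) k l * (a*b - b*a) k l = 0 := by
    intro k l
    have h := hent k l k l
    rw [mul_comm ((a*b - b*a) k l)] at h
    have h2 : (2:ℂ) * ((d (a*b) - d a * b - a * d b) k l * (a*b - b*a) k l) = 0 := by
      rw [two_mul]; exact h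
    rcases mul_eq_zero.mp h2 with h3 | h3
    · exact absurd h3 two_ne_zero
    · exact h3
  obtain ⟨k, l, hkl⟩ : ∃ k l : Fin n, (a*b - b*a) k l ≠ 0 := by
    by_contra hno
    push_neg at hno
    exact hq0 (by ext k l; simpa using hno k l)
  ext i j
  simp only [Matrix.zero_apply]
  have h2 := hent i j k l
  have h3 : (d (a*b) - d a * b - a * d b) i j * ((a*b - b*a) k l * (a*b - b*a) k l)
      + (a*b - b*a) i j * ((d (a*b) - d a * b - a * d b) k l * (a*b - b*a) k l) = 0 := by
    linear_combination ((a*b - b*a) k l) * h2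
  rw [hdiag k l, mul_zero, add_zero] at h3
  rcases mul_eq_zero.mp h3 with h4 | h4
  · exact h4
  · exact absurd (mul_self_eq_zero.mp h4) hkl

include hsmul'

lemma herFinal (a b : Matrix (Fin n) (Fin n) ℂ) :
    d (a * b) = d a * b + a * d b := by
  have hd1 : d (1 : Matrix (Fin n) (Fin n) ℂ) = 0 := by
    have h := hH2' 1 1
    rw [mul_one, hadd'] at h
    simp only [mul_one, one_mul] at h
    rw [add_assoc] at h
    have h2 := left_eq_add.mp h
    exact cancel_two' (by rw [h2, add_zero])
  have hsub : ∀ u v w : Matrix (Fin n) (Fin n) ℂ, u - v - w = 0 → u = v + w := by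
    intro u v w h
    have := sub_eq_zero.mp (by rw [← h]; abel : u - (v + w) = 0)
    exact this
  rcases herOr hadd' hH2' a b with h | hcomm
  · exact hsub _ _ _ h
  by_cases hsc : ∀ i j : Fin n, i ≠ j → Commute (Matrix.single i j (1:ℂ)) a
  · -- a is scalar
    obtain ⟨r, hr⟩ := Matrix.mem_range_scalar_iff_commute_single.mpr hsc
    have ha1 : a = r • (1 : Matrix (Fin n) (Fin n) ℂ) := by
      rw [← hr]
      ext i j
      by_cases hij : i = j <;>
        simp [Matrix.scalar_apply, Matrix.one_apply, Matrix.diagonal_apply, hij]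
    rw [ha1, smul_mul_assoc, one_mul, hsmul', hsmul', hd1, smul_zero, zero_mul, zero_add,
      smul_mul_assoc, one_mul]
  · push_neg at hsc
    obtain ⟨i, j, hij, hnc⟩ := hsc
    set c := Matrix.single i j (1:ℂ) with hc
    have hac : a * c - c * a ≠ 0 := by
      intro h0
      exact hnc ((sub_eq_zero.mp h0).symm)
    have hne1 : a * (b + c) ≠ (b + c) * a := by
      intro h0
      apply hac
      rw [mul_add, add_mul, hcomm] at h0
      rw [add_left_cancel h0, sub_self]
    have hne2 : a * (b + (2:ℂ) • c) ≠ (b + (2:ℂ) • c) * a := by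
      intro h0
      apply hac
      rw [mul_add, add_mul, hcomm, mul_smul_comm, smul_mul_assoc] at h0
      have h1 := add_left_cancel h0
      have h2 : (2:ℂ) • (a * c - c * a) = 0 := by rw [smul_sub, h1, sub_self]
      simpa using smul_eq_zero.mp h2
    have hO1 := (herOr hadd' hH2' a (b + c)).resolve_right hne1
    have hO2 := (herOr hadd' hH2' a (b + (2:ℂ) • c)).resolve_right hne2
    simp only [mul_add, add_mul, hadd', mul_smul_comm, smul_mul_assoc, hsmul'] at hO1 hO2
    have e1 : (d (a*b) - d a * b - a * d b) + (d (a*c) - d a * c - a * d c) = 0 := by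
      rw [← hO1]; abel
    have e2 : (d (a*b) - d a * b - a * d b) + (2:ℂ) • (d (a*c) - d a * c - a * d c) = 0 := by
      rw [← hO2]; module
    have hδ2 : d (a*c) - d a * c - a * d c = 0 := by
      have h3 : (d (a*b) - d a * b - a * d b) = -(d (a*c) - d a * c - a * d c) :=
        eq_neg_of_add_eq_zero_left e1
      rw [h3] at e2
      have : d (a*c) - d a * c - a * d c
          = -(d (a*c) - d a * c - a * d c) + (2:ℂ) • (d (a*c) - d a * c - a * d c) := by module
      rw [this, e2]
    have hδ1 : d (a*b) - d a * b - a * d b = 0 := by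
      rw [hδ2] at e1
      simpa using e1
    exact hsub _ _ _ hδ1

end Herstein2

end Aux

/-- Every weak-2-local *-derivation on `Mₙ(ℂ)` is linear and a derivation. -/
theorem weak2local_star_derivation_on_Mn_is_derivation {n : ℕ} (hn : 0 < n)
    (Δ : Matrix (Fin n) (Fin n) ℂ → Matrix (Fin n) (Fin n) ℂ)
    (hΔ : IsWeak2LocalStarDerivation Δ) :
    (∀ x y, Δ (x + y) = Δ x + Δ y) ∧
    (∀ (c : ℂ) (x), Δ (c • x) = c • Δ x) ∧
    (∀ x y, Δ (x * y) = Δ x * y + x * Δ y) := by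
  exact ⟨hadd hΔ, hom hΔ, herFinal (hadd hΔ) (hom hΔ) (H2 hΔ)⟩
end

section
/- Every weak-2-local derivation Δ on the C*-algebra M₂(ℂ) of 2×2 complex matrices is a ℂ-linear map and a derivation, i.e. Δ(x + y) = Δ(x) + Δ(y), Δ(λx) = λΔ(x) and Δ(xy) = Δ(x)y + xΔ(y) for all x, y ∈ M₂(ℂ) and λ ∈ ℂ. -/
open scoped Matrix.Norms.L2Operator

/-- A (not necessarily linear) map `Δ` on `Mₙ(ℂ)` is a weak-2-local derivation if for all
`a b` and every continuous linear functional `φ` there is a derivation `D` (bundled as a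
`ℂ`-linear map satisfying the Leibniz rule) such that
`φ (Δ a) = φ (D a)` and `φ (Δ b) = φ (D b)`. -/
def IsWeak2LocalDerivation {n : ℕ} (Δ : Matrix (Fin n) (Fin n) ℂ → Matrix (Fin n) (Fin n) ℂ) :
    Prop :=
  ∀ (a b : Matrix (Fin n) (Fin n) ℂ) (φ : Matrix (Fin n) (Fin n) ℂ →L[ℂ] ℂ),
    ∃ D : Matrix (Fin n) (Fin n) ℂ →ₗ[ℂ] Matrix (Fin n) (Fin n) ℂ,
      (∀ x y, D (x * y) = D x * y + x * D y) ∧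
      φ (Δ a) = φ (D a) ∧ φ (Δ b) = φ (D b)

namespace Weak2LocalAux

abbrev M2 := Matrix (Fin 2) (Fin 2) ℂ

/-- The continuous linear functional `z ↦ tr (z c)`. -/
noncomputable def trc (c : M2) : M2 →L[ℂ] ℂ :=
  LinearMap.toContinuousLinearMap
    { toFun := fun z => (z * c).trace
      map_add' := by intro x y; simp [add_mul]
      map_smul' := by intro m x; simp [smul_mul_assoc] }

@[simp] lemma trc_apply (c z : M2) : trc c z = (z * c).trace := rfl

section Deriv
variable (D : M2 →ₗ[ℂ] M2) (hD : ∀ x y, D (x * y) = D x * y + x * D y)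
include hD

lemma D_one : D 1 = 0 := by
  have h := hD 1 1
  simp only [one_mul, mul_one] at h
  have := h.symm
  rwa [add_eq_left] at this

lemma trace_D_comm (u v : M2) : (D (u * v - v * u)).trace = 0 := by
  rw [map_sub, hD, hD, Matrix.trace_sub, Matrix.trace_add, Matrix.trace_add,
    Matrix.trace_mul_comm (D u) v, Matrix.trace_mul_comm (D v) u]
  ring

/-- Derivations on `M₂(ℂ)` have trace-free values. -/
lemma trace_D (w : M2) : (D w).trace = 0 := by
  have t12 : (D !![0,1;0,0]).trace = 0 := by
    have h := trace_D_comm D hD !![1,0;0,0] !![0,1;0,0]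
    have e : (!![1,0;0,0] * !![0,1;0,0] - !![0,1;0,0] * !![1,0;0,0] : M2) = !![0,1;0,0] := by
      ext i j; fin_cases i <;> fin_cases j <;> simp [Matrix.mul_apply, Fin.sum_univ_two]
    rwa [e] at h
  have t21 : (D !![0,0;1,0]).trace = 0 := by
    have h := trace_D_comm D hD !![0,0;1,0] !![1,0;0,0]
    have e : (!![0,0;1,0] * !![1,0;0,0] - !![1,0;0,0] * !![0,0;1,0] : M2) = !![0,0;1,0] := by
      ext i j; fin_cases i <;> fin_cases j <;> simp [Matrix.mul_apply, Fin.sum_univ_two]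
    rwa [e] at h
  have tdiff : (D !![1,0;0,0]).trace - (D !![0,0;0,1]).trace = 0 := by
    have h := trace_D_comm D hD !![0,1;0,0] !![0,0;1,0]
    have e : (!![0,1;0,0] * !![0,0;1,0] - !![0,0;1,0] * !![0,1;0,0] : M2)
        = !![1,0;0,0] - !![0,0;0,1] := by
      ext i j; fin_cases i <;> fin_cases j <;> simp [Matrix.mul_apply, Fin.sum_univ_two]
    rw [e, map_sub, Matrix.trace_sub] at h
    exact h
  have tsum : (D !![1,0;0,0]).trace + (D !![0,0;0,1]).trace = 0 := by
    have e : (!![1,0;0,0] + !![0,0;0,1] : M2) = 1 := by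
      ext i j; fin_cases i <;> fin_cases j <;> simp [Matrix.one_apply]
    have h : (D (!![1,0;0,0] + !![0,0;0,1] : M2)).trace = 0 := by
      rw [e, D_one D hD]; simp
    rw [map_add, Matrix.trace_add] at h
    exact h
  have t11 : (D !![1,0;0,0]).trace = 0 := by linear_combination (tdiff + tsum) / 2
  have t22 : (D !![0,0;0,1]).trace = 0 := by linear_combination (tsum - tdiff) / 2
  have hw : w = w 0 0 • !![1,0;0,0] + w 0 1 • !![0,1;0,0]
      + w 1 0 • !![0,0;1,0] + w 1 1 • !![0,0;0,1] := by
    ext i j; fin_cases i <;> fin_cases j <;> simp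
  rw [hw]
  simp only [map_add, map_smul, Matrix.trace_add, Matrix.trace_smul, t11, t12, t21, t22]
  simp

lemma trace_D_sq (c : M2) : (D c * c).trace = 0 := by
  have h : (D (c * c)).trace = 0 := trace_D D hD _
  rw [hD, Matrix.trace_add, Matrix.trace_mul_comm c (D c)] at h
  linear_combination h / 2

end Deriv

lemma trace_mul_lit (Z c : M2) :
    (Z * c).trace = Z 0 0 * c 0 0 + Z 0 1 * c 1 0 + Z 1 0 * c 0 1 + Z 1 1 * c 1 1 := by
  simp [Matrix.trace_fin_two, Matrix.mul_apply, Fin.sum_univ_two]; ring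

variable {Δ : M2 → M2}

/-- Values of a weak-2-local derivation are trace-free. -/
lemma Mtr (hΔ : IsWeak2LocalDerivation Δ) (x : M2) : Δ x 0 0 + Δ x 1 1 = 0 := by
  obtain ⟨D, hD, hx, -⟩ := hΔ x x (trc 1)
  simp only [trc_apply, mul_one] at hx
  have h0 : (Δ x).trace = 0 := by rw [hx]; exact trace_D D hD x
  rw [Matrix.trace_fin_two] at h0
  exact h0

/-- The key comparison lemma: if `x - l • y` lies in the span of `1` and `c`, then
`tr (Δ x · c) = l · tr (Δ y · c)`. -/
lemma key (hΔ : IsWeak2LocalDerivation Δ) (x y c : M2) (l α β : ℂ)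
    (h : x = l • y + α • 1 + β • c) :
    (Δ x * c).trace = l * (Δ y * c).trace := by
  obtain ⟨D, hD, hx, hy⟩ := hΔ x y (trc c)
  simp only [trc_apply] at hx hy
  rw [hx, hy, h]
  rw [map_add, map_add, map_smul, map_smul, map_smul, D_one D hD]
  simp only [smul_zero, add_zero, Matrix.add_mul, Matrix.smul_mul, Matrix.trace_add,
    Matrix.trace_smul, trace_D_sq D hD c]
  simp

section Steps
variable (hΔ : IsWeak2LocalDerivation Δ)
include hΔ

lemma stepW : ∃ a12 a21 : ℂ, Δ !![1,0;0,0] = !![0, -a12; a21, 0] := by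
  refine ⟨-(Δ !![1,0;0,0] 0 1), Δ !![1,0;0,0] 1 0, ?_⟩
  have h1 := key hΔ !![1,0;0,0] !![1,0;0,0] !![1,0;0,0] 0 0 1
    (by ext i j; fin_cases i <;> fin_cases j <;> simp [Matrix.one_apply])
  have h2 := Mtr hΔ !![1,0;0,0]
  rw [trace_mul_lit] at h1
  simp at h1
  ext i j
  fin_cases i <;> fin_cases j <;> simp
  · linear_combination h1
  · linear_combination h2 - h1

variable (a11 a12 a21 : ℂ)

lemma stepY (hW : Δ !![1,0;0,0] = !![0, -a12; a21, 0]) :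
    ∃ a11 : ℂ, Δ !![0,1;0,0] = !![-a21, a11; 0, a21] := by
  refine ⟨Δ !![0,1;0,0] 0 1, ?_⟩
  have h1 := key hΔ !![0,1;0,0] !![0,1;0,0] !![0,1;0,0] 0 0 1
    (by ext i j; fin_cases i <;> fin_cases j <;> simp [Matrix.one_apply])
  have h2 := Mtr hΔ !![0,1;0,0]
  have h3 := key hΔ !![0,1;0,0] !![1,0;0,0] !![0,1;0,1] 1 (-1) 1
    (by ext i j; fin_cases i <;> fin_cases j <;> simp [Matrix.one_apply])
  rw [hW] at h3
  rw [trace_mul_lit] at h1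
  rw [trace_mul_lit, trace_mul_lit] at h3
  simp at h1 h3
  ext i j
  fin_cases i <;> fin_cases j <;> simp
  · linear_combination h2 - h3 + h1
  · linear_combination h1
  · linear_combination h3 - h1

lemma stepZ (hW : Δ !![1,0;0,0] = !![0, -a12; a21, 0])
    (hY : Δ !![0,1;0,0] = !![-a21, a11; 0, a21]) :
    Δ !![0,0;1,0] = !![a12, 0; -a11, -a12] := by
  have h1 := key hΔ !![0,0;1,0] !![0,0;1,0] !![0,0;1,0] 0 0 1
    (by ext i j; fin_cases i <;> fin_cases j <;> simp [Matrix.one_apply])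
  have h2 := Mtr hΔ !![0,0;1,0]
  have h3 := key hΔ !![0,0;1,0] !![1,0;0,0] !![1,0;1,0] (-1) 0 1
    (by ext i j; fin_cases i <;> fin_cases j <;> simp [Matrix.one_apply])
  have h4 := key hΔ !![0,0;1,0] !![0,1;0,0] !![0,1;1,0] (-1) 0 1
    (by ext i j; fin_cases i <;> fin_cases j <;> simp [Matrix.one_apply])
  rw [hW] at h3
  rw [hY] at h4
  rw [trace_mul_lit] at h1
  rw [trace_mul_lit, trace_mul_lit] at h3
  rw [trace_mul_lit, trace_mul_lit] at h4
  simp at h1 h3 h4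
  ext i j
  fin_cases i <;> fin_cases j <;> simp
  · linear_combination h3 - h1
  · linear_combination h1
  · linear_combination h4 - h1
  · linear_combination h2 - h3 + h1

lemma stepM (hW : Δ !![1,0;0,0] = !![0, -a12; a21, 0])
    (hY : Δ !![0,1;0,0] = !![-a21, a11; 0, a21])
    (hZ : Δ !![0,0;1,0] = !![a12, 0; -a11, -a12]) (q r : ℂ) :
    Δ !![0,q;r,0] = !![r*a12 - q*a21, q*a11; -(r*a11), q*a21 - r*a12] := by
  have h1 := Mtr hΔ !![0,q;r,0]
  have h2 := key hΔ !![0,q;r,0] !![0,1;0,0] !![0,0;1,0] q 0 r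
    (by ext i j; fin_cases i <;> fin_cases j <;> simp [Matrix.one_apply])
  have h3 := key hΔ !![0,q;r,0] !![0,0;1,0] !![0,1;0,0] r 0 q
    (by ext i j; fin_cases i <;> fin_cases j <;> simp [Matrix.one_apply])
  have h4 := key hΔ !![0,q;r,0] !![1,0;0,0] !![1,q;r,0] (-1) 0 1
    (by ext i j; fin_cases i <;> fin_cases j <;> simp [Matrix.one_apply])
  rw [hY] at h2
  rw [hZ] at h3
  rw [hW] at h4
  rw [trace_mul_lit, trace_mul_lit] at h2
  rw [trace_mul_lit, trace_mul_lit] at h3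
  rw [trace_mul_lit, trace_mul_lit] at h4
  simp at h2 h3 h4
  ext i j
  fin_cases i <;> fin_cases j <;> simp
  · linear_combination h4 - r*h2 - q*h3
  · linear_combination h2
  · linear_combination h3
  · linear_combination h1 - h4 + r*h2 + q*h3

lemma stepU (hW : Δ !![1,0;0,0] = !![0, -a12; a21, 0])
    (hY : Δ !![0,1;0,0] = !![-a21, a11; 0, a21])
    (hZ : Δ !![0,0;1,0] = !![a12, 0; -a11, -a12]) (q s : ℂ) :
    Δ !![0,q;0,s] = !![-(q*a21), q*a11 + s*a12; -(s*a21), q*a21] := by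
  have h1 := Mtr hΔ !![0,q;0,s]
  have h2 := key hΔ !![0,q;0,s] !![1,0;0,0] !![0,1;0,0] (-s) s q
    (by ext i j; fin_cases i <;> fin_cases j <;> simp [Matrix.one_apply])
  have h3 := key hΔ !![0,q;0,s] !![0,1;0,0] !![0,0;0,1] q 0 s
    (by ext i j; fin_cases i <;> fin_cases j <;> simp [Matrix.one_apply])
  have h4 := key hΔ !![0,q;0,s] !![0,0;1,0] !![0,q;1,s] (-1) 0 1
    (by ext i j; fin_cases i <;> fin_cases j <;> simp [Matrix.one_apply])
  rw [hW] at h2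
  rw [hY] at h3
  rw [hZ] at h4
  rw [trace_mul_lit, trace_mul_lit] at h2
  rw [trace_mul_lit, trace_mul_lit] at h3
  rw [trace_mul_lit, trace_mul_lit] at h4
  simp at h2 h3 h4
  ext i j
  fin_cases i <;> fin_cases j <;> simp
  · linear_combination h1 - h3
  · linear_combination h4 - q*h2 - s*h3
  · linear_combination h2
  · linear_combination h3

lemma stepL (hW : Δ !![1,0;0,0] = !![0, -a12; a21, 0])
    (hY : Δ !![0,1;0,0] = !![-a21, a11; 0, a21])
    (hZ : Δ !![0,0;1,0] = !![a12, 0; -a11, -a12]) (r s : ℂ) :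
    Δ !![0,0;r,s] = !![r*a12, s*a12; -(r*a11) - s*a21, -(r*a12)] := by
  have h1 := Mtr hΔ !![0,0;r,s]
  have h2 := key hΔ !![0,0;r,s] !![1,0;0,0] !![0,0;1,0] (-s) s r
    (by ext i j; fin_cases i <;> fin_cases j <;> simp [Matrix.one_apply])
  have h3 := key hΔ !![0,0;r,s] !![0,0;1,0] !![1,0;0,0] r s (-s)
    (by ext i j; fin_cases i <;> fin_cases j <;> simp [Matrix.one_apply])
  have h4 := key hΔ !![0,0;r,s] !![0,1;0,0] !![0,1;r,s] (-1) 0 1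
    (by ext i j; fin_cases i <;> fin_cases j <;> simp [Matrix.one_apply])
  rw [hW] at h2
  rw [hZ] at h3
  rw [hY] at h4
  rw [trace_mul_lit, trace_mul_lit] at h2
  rw [trace_mul_lit, trace_mul_lit] at h3
  rw [trace_mul_lit, trace_mul_lit] at h4
  simp at h2 h3 h4
  ext i j
  fin_cases i <;> fin_cases j <;> simp
  · linear_combination h3
  · linear_combination h2
  · linear_combination h4 - r*h2 - s*h1 + s*h3
  · linear_combination h1 - h3

lemma stepX (hW : Δ !![1,0;0,0] = !![0, -a12; a21, 0])
    (hY : Δ !![0,1;0,0] = !![-a21, a11; 0, a21])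
    (hZ : Δ !![0,0;1,0] = !![a12, 0; -a11, -a12]) (p q r s : ℂ) :
    Δ !![p,q;r,s] = !![r*a12 - q*a21, q*a11 + (s-p)*a12;
      (p-s)*a21 - r*a11, q*a21 - r*a12] := by
  have hM := stepM hΔ a11 a12 a21 hW hY hZ q r
  have hU := stepU hΔ a11 a12 a21 hW hY hZ q (s - p)
  have hL := stepL hΔ a11 a12 a21 hW hY hZ r (s - p)
  have h1 := Mtr hΔ !![p,q;r,s]
  have h2 := key hΔ !![p,q;r,s] !![0,q;r,0] !![1,0;0,0] 1 s (p-s)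
    (by ext i j; fin_cases i <;> fin_cases j <;> simp [Matrix.one_apply])
  have h3 := key hΔ !![p,q;r,s] !![0,q;0,s-p] !![0,0;1,0] 1 p r
    (by ext i j; fin_cases i <;> fin_cases j <;> simp [Matrix.one_apply])
  have h4 := key hΔ !![p,q;r,s] !![0,0;r,s-p] !![0,1;0,0] 1 p q
    (by ext i j; fin_cases i <;> fin_cases j <;> simp [Matrix.one_apply])
  rw [hM] at h2
  rw [hU] at h3
  rw [hL] at h4
  rw [trace_mul_lit, trace_mul_lit] at h2
  rw [trace_mul_lit, trace_mul_lit] at h3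
  rw [trace_mul_lit, trace_mul_lit] at h4
  simp at h2 h3 h4
  ext i j
  fin_cases i <;> fin_cases j <;> simp
  · linear_combination h2
  · linear_combination h3
  · linear_combination h4
  · linear_combination h1 - h2

end Steps

/-- A weak-2-local derivation on `M₂(ℂ)` is an inner derivation. -/
lemma inner (hΔ : IsWeak2LocalDerivation Δ) : ∃ A : M2, ∀ x, Δ x = A * x - x * A := by
  obtain ⟨a12, a21, hW⟩ := stepW hΔ
  obtain ⟨a11, hY⟩ := stepY hΔ a12 a21 hW
  have hZ := stepZ hΔ a11 a12 a21 hW hY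
  refine ⟨!![a11, a12; a21, 0], fun x => ?_⟩
  have hx := stepX hΔ a11 a12 a21 hW hY hZ (x 0 0) (x 0 1) (x 1 0) (x 1 1)
  rw [← Matrix.eta_fin_two x] at hx
  rw [hx, Matrix.eta_fin_two x]
  ext i j
  fin_cases i <;> fin_cases j <;>
    simp [Matrix.mul_apply, Fin.sum_univ_two] <;> ring

end Weak2LocalAux

/-- Every weak-2-local derivation on `M₂(ℂ)` is linear and a derivation. -/
theorem weak2local_derivation_on_M2_is_derivation
    (Δ : Matrix (Fin 2) (Fin 2) ℂ → Matrix (Fin 2) (Fin 2) ℂ)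
    (hΔ : IsWeak2LocalDerivation Δ) :
    (∀ x y, Δ (x + y) = Δ x + Δ y) ∧
    (∀ (c : ℂ) (x), Δ (c • x) = c • Δ x) ∧
    (∀ x y, Δ (x * y) = Δ x * y + x * Δ y) := by
  obtain ⟨A, hA⟩ := Weak2LocalAux.inner hΔ
  refine ⟨fun x y => ?_, fun c x => ?_, fun x y => ?_⟩
  · rw [hA, hA, hA]; noncomm_ring
  · rw [hA, hA, Matrix.mul_smul, Matrix.smul_mul, smul_sub]
  · rw [hA (x * y), hA x, hA y]; noncomm_ring
end

section
/- Let n be a positive natural number and let Δ : Mₙ(ℂ) → Mₙ(ℂ) be a weak-2-local derivation on the C*-algebra Mₙ(ℂ) of n×n complex matrices. Then the trace of Δ(x) is zero for every x ∈ Mₙ(ℂ). -/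
open scoped Matrix.Norms.L2Operator

/-- Any (algebraic) derivation on `Mₙ(ℂ)` has trace-zero image. -/
lemma trace_derivation_eq_zero {n : ℕ} (hn : 0 < n)
    (D : Matrix (Fin n) (Fin n) ℂ →ₗ[ℂ] Matrix (Fin n) (Fin n) ℂ)
    (hD : ∀ x y, D (x * y) = D x * y + x * D y) (m : Matrix (Fin n) (Fin n) ℂ) :
    Matrix.trace (D m) = 0 := by
  -- trace D (x*y) = trace D (y*x)
  have hcomm : ∀ x y, Matrix.trace (D (x * y)) = Matrix.trace (D (y * x)) := by
    intro x y
    rw [hD, hD, Matrix.trace_add, Matrix.trace_add, Matrix.trace_mul_comm,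
      Matrix.trace_mul_comm x (D y), add_comm]
  -- D 1 = 0
  have h1 : D 1 = 0 := by
    have h := hD 1 1
    simp only [mul_one, one_mul] at h
    exact (left_eq_add.mp h)
  set z : Fin n := ⟨0, hn⟩
  -- all diagonal basis matrices have the same trace under D
  have hdiag : ∀ i : Fin n,
      Matrix.trace (D (Matrix.single i i 1)) =
      Matrix.trace (D (Matrix.single z z 1)) := by
    intro i
    have e1 : Matrix.single i i (1 : ℂ) =
        Matrix.single i z 1 * Matrix.single z i 1 := by
      rw [Matrix.single_mul_single_same]; norm_num
    have e2 : Matrix.single z z (1 : ℂ) =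
        Matrix.single z i 1 * Matrix.single i z 1 := by
      rw [Matrix.single_mul_single_same]; norm_num
    rw [e1, e2, hcomm]
  -- trace of D on every std basis matrix vanishes
  have hbasis : ∀ i j : Fin n, Matrix.trace (D (Matrix.single i j 1)) = 0 := by
    intro i j
    rcases eq_or_ne i j with rfl | hij
    · -- diagonal case
      have hone : (1 : Matrix (Fin n) (Fin n) ℂ) =
          ∑ k : Fin n, Matrix.single k k 1 := by
        ext a b
        rw [Matrix.sum_apply]
        by_cases h : a = b
        · subst h
          simp [Matrix.single, Matrix.one_apply]
        · have hx : ∀ x : Fin n, ¬(x = a ∧ x = b) := by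
            rintro x ⟨rfl, rfl⟩; exact h rfl
          simp [Matrix.single, Matrix.one_apply, h,
            Finset.filter_false_of_mem (fun x _ => hx x)]
      have hsum : (0 : ℂ) = ∑ k : Fin n, Matrix.trace (D (Matrix.single k k 1)) := by
        have : Matrix.trace (D (1 : Matrix (Fin n) (Fin n) ℂ)) =
            ∑ k : Fin n, Matrix.trace (D (Matrix.single k k 1)) := by
          conv_lhs => rw [hone]
          rw [map_sum, Matrix.trace_sum]
        rw [← this, h1]
        simp
      rw [Finset.sum_congr rfl (fun k _ => hdiag k), Finset.sum_const, Finset.card_univ,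
        Fintype.card_fin, nsmul_eq_mul] at hsum
      have hn' : (n : ℂ) ≠ 0 := by exact_mod_cast hn.ne'
      have := (mul_eq_zero.mp hsum.symm).resolve_left hn'
      rw [hdiag i, this]
    · -- off-diagonal case: E_ij = E_ii * E_ij, while E_ij * E_ii = 0
      have e1 : Matrix.single i j (1 : ℂ) =
          Matrix.single i i 1 * Matrix.single i j 1 := by
        rw [Matrix.single_mul_single_same]; norm_num
      have e2 : Matrix.single i j (1 : ℂ) * Matrix.single i i 1 = 0 :=
        Matrix.single_mul_single_of_ne (c := 1) i j i hij.symm 1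
      calc Matrix.trace (D (Matrix.single i j 1))
          = Matrix.trace (D (Matrix.single i i 1 * Matrix.single i j 1)) := by
            rw [← e1]
        _ = Matrix.trace (D (Matrix.single i j 1 * Matrix.single i i 1)) :=
            hcomm _ _
        _ = 0 := by rw [e2, map_zero, Matrix.trace_zero]
  -- expand m in the std basis
  conv_lhs => rw [Matrix.matrix_eq_sum_single m]
  rw [map_sum, Matrix.trace_sum]
  refine Finset.sum_eq_zero fun i _ => ?_
  rw [map_sum, Matrix.trace_sum]
  refine Finset.sum_eq_zero fun j _ => ?_
  have : Matrix.single i j (m i j) = m i j • Matrix.single i j 1 := by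
    rw [Matrix.smul_single, smul_eq_mul, mul_one]
  rw [this, map_smul, Matrix.trace_smul, hbasis, smul_zero]

/-- The image of any weak-2-local derivation on `Mₙ(ℂ)` consists of trace-zero matrices. -/
theorem trace_of_weak2local_derivation_eq_zero {n : ℕ} (hn : 0 < n)
    (Δ : Matrix (Fin n) (Fin n) ℂ → Matrix (Fin n) (Fin n) ℂ)
    (hΔ : IsWeak2LocalDerivation Δ) (x : Matrix (Fin n) (Fin n) ℂ) :
    Matrix.trace (Δ x) = 0 := by
  let φ : Matrix (Fin n) (Fin n) ℂ →L[ℂ] ℂ :=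
    LinearMap.toContinuousLinearMap (Matrix.traceLinearMap (Fin n) ℂ ℂ)
  obtain ⟨D, hD, hx, -⟩ := hΔ x x φ
  have hφ : ∀ y, φ y = Matrix.trace y := fun y => rfl
  rw [hφ, hφ] at hx
  rw [hx, trace_derivation_eq_zero hn D hD]
end

section
/- Let n ≥ 2 be a natural number and let Δ : Mₙ(ℂ) → Mₙ(ℂ) be a weak-2-local *-derivation. Let p₁, …, pₙ be mutually orthogonal minimal projections in Mₙ(ℂ) (pᵢpⱼ = 0 for i ≠ j) and set q = p₁ + … + p_{n−1}. Then for all real numbers λ₁, …, λₙ and every a ∈ Mₙ(ℂ) with a* = a and a = q a pₙ + pₙ a q, one has Δ(∑_{j=1}^{n} λⱼ pⱼ + a) = ∑_{j=1}^{n} λⱼ Δ(pⱼ) + Δ(a). Moreover, the restriction of Δ to the set of self-adjoint elements a with a = q a pₙ + pₙ a q is additive and real-homogeneous. -/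
open scoped Matrix.Norms.L2Operator

/-- A projection `p` in `Mₙ(ℂ)` is minimal if `p ≠ 0` and `pMₙ(ℂ)p = ℂp`. -/
def IsMinimalProjection {n : ℕ} (p : Matrix (Fin n) (Fin n) ℂ) : Prop :=
  star p = p ∧ p * p = p ∧ p ≠ 0 ∧ ∀ x, ∃ c : ℂ, p * x * p = c • p

section AuxW2L

variable {n : ℕ}

private lemma w2l_trace_D_of_idem (D : Matrix (Fin n) (Fin n) ℂ →ₗ[ℂ] Matrix (Fin n) (Fin n) ℂ)
    (hD : ∀ x y, D (x * y) = D x * y + x * D y)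
    (e : Matrix (Fin n) (Fin n) ℂ) (he : e * e = e) :
    (D e).trace = 0 := by
  have h1 : D e = D e * e + e * D e := by
    have := hD e e
    rwa [he] at this
  have h2 : e * D e * e = 0 := by
    have h3 : e * D e * e = e * (D e * e + e * D e) * e := by rw [← h1]
    have ha : e * (D e * e) * e = e * D e * e := by
      rw [← mul_assoc e (D e) e, mul_assoc (e * D e) e e, he]
    have hb : e * (e * D e) * e = e * D e * e := by
      rw [← mul_assoc e e (D e), he]
    have h4 : e * (D e * e + e * D e) * e = e * D e * e + e * D e * e := by
      rw [mul_add, add_mul, ha, hb]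
    rw [h4] at h3
    rwa [right_eq_add] at h3
  have h5 : (D e * e).trace = 0 := by
    have h6 : D e * e = D e * (e * e) := by rw [he]
    rw [h6, ← mul_assoc, Matrix.trace_mul_comm, ← mul_assoc, h2, Matrix.trace_zero]
  calc (D e).trace = (D e * e + e * D e).trace := by rw [← h1]
    _ = (D e * e).trace + (e * D e).trace := Matrix.trace_add _ _
    _ = (D e * e).trace + (D e * e).trace := by rw [Matrix.trace_mul_comm e (D e)]
    _ = 0 := by rw [h5, add_zero]

private lemma w2l_trace_D (D : Matrix (Fin n) (Fin n) ℂ →ₗ[ℂ] Matrix (Fin n) (Fin n) ℂ)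
    (hD : ∀ x y, D (x * y) = D x * y + x * D y)
    (u : Matrix (Fin n) (Fin n) ℂ) : (D u).trace = 0 := by
  have hbasis : ∀ i j : Fin n, (D (Matrix.single i j 1)).trace = 0 := by
    intro i j
    by_cases hij : i = j
    · subst hij
      exact w2l_trace_D_of_idem D hD _ (by
        rw [Matrix.single_mul_single_same, mul_one])
    · have he : (Matrix.single i i (1 : ℂ) + Matrix.single i j 1) *
          (Matrix.single i i 1 + Matrix.single i j 1) =
          Matrix.single i i 1 + Matrix.single i j 1 := by
        rw [add_mul, mul_add, mul_add, Matrix.single_mul_single_same,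
          Matrix.single_mul_single_same,
          Matrix.single_mul_single_of_ne (h := fun h : j = i => hij h.symm),
          Matrix.single_mul_single_of_ne (h := fun h : j = i => hij h.symm)]
        simp
      have h0 := w2l_trace_D_of_idem D hD (Matrix.single i i 1 + Matrix.single i j 1) he
      have h1 := w2l_trace_D_of_idem D hD (Matrix.single i i 1) (by
        rw [Matrix.single_mul_single_same, mul_one])
      rw [map_add, Matrix.trace_add, h1, zero_add] at h0
      exact h0
  conv_lhs => rw [Matrix.matrix_eq_sum_single u]
  rw [map_sum, Matrix.trace_sum]
  refine Finset.sum_eq_zero fun i _ => ?_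
  rw [map_sum, Matrix.trace_sum]
  refine Finset.sum_eq_zero fun j _ => ?_
  have : Matrix.single i j (u i j) = u i j • Matrix.single i j 1 := by
    rw [Matrix.smul_single, smul_eq_mul, mul_one]
  rw [this, map_smul, Matrix.trace_smul, hbasis, smul_zero]

private lemma w2l_trace_D_mul_self (D : Matrix (Fin n) (Fin n) ℂ →ₗ[ℂ] Matrix (Fin n) (Fin n) ℂ)
    (hD : ∀ x y, D (x * y) = D x * y + x * D y)
    (h : Matrix (Fin n) (Fin n) ℂ) : (D h * h).trace = 0 := by
  have h1 : (D (h * h)).trace = 0 := w2l_trace_D D hD (h * h)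
  rw [hD h h, Matrix.trace_add, Matrix.trace_mul_comm h (D h)] at h1
  exact add_self_eq_zero.mp h1

/-- The trace functional `u ↦ tr (u * h)` as a continuous linear functional. -/
private noncomputable def w2l_phi (h : Matrix (Fin n) (Fin n) ℂ) :
    Matrix (Fin n) (Fin n) ℂ →L[ℂ] ℂ :=
  LinearMap.toContinuousLinearMap
    ((Matrix.traceLinearMap (Fin n) ℂ ℂ).comp (LinearMap.mulRight ℂ h))

private lemma w2l_phi_apply (h u : Matrix (Fin n) (Fin n) ℂ) :
    w2l_phi h u = (u * h).trace := rfl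

/-- Key consequence of weak-2-locality: if `h = x - ρ • y` then
`tr (Δ x * h) = ρ * tr (Δ y * h)`. -/
private lemma w2l_key {Δ : Matrix (Fin n) (Fin n) ℂ → Matrix (Fin n) (Fin n) ℂ}
    (hΔ : IsWeak2LocalStarDerivation Δ) (x y : Matrix (Fin n) (Fin n) ℂ) (ρ : ℂ) :
    (Δ x * (x - ρ • y)).trace = ρ * (Δ y * (x - ρ • y)).trace := by
  set h : Matrix (Fin n) (Fin n) ℂ := x - ρ • y with hh
  obtain ⟨D, hLeib, -, h1, h2⟩ := hΔ x y (w2l_phi h)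
  rw [w2l_phi_apply, w2l_phi_apply] at h1 h2
  have hx : x = h + ρ • y := by rw [hh]; abel
  calc (Δ x * h).trace = (D x * h).trace := h1
    _ = ((D h + ρ • D y) * h).trace := by rw [hx, map_add, map_smul]
    _ = (D h * h).trace + ρ * (D y * h).trace := by
        rw [add_mul, Matrix.smul_mul, Matrix.trace_add, Matrix.trace_smul, smul_eq_mul]
    _ = ρ * (D y * h).trace := by rw [w2l_trace_D_mul_self D hLeib h, zero_add]
    _ = ρ * (Δ y * h).trace := by rw [h2]

/-- Antisymmetry of the trace pairing. -/
private lemma w2l_antisym {Δ : Matrix (Fin n) (Fin n) ℂ → Matrix (Fin n) (Fin n) ℂ}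
    (hΔ : IsWeak2LocalStarDerivation Δ) (x y : Matrix (Fin n) (Fin n) ℂ) :
    (Δ x * y).trace = -(Δ y * x).trace := by
  have t1 := w2l_key hΔ x y 1
  have t2 := w2l_key hΔ x y (-1)
  rw [one_smul, one_mul] at t1
  rw [neg_smul, one_smul, sub_neg_eq_add, neg_one_mul] at t2
  have e1 : (Δ x * x).trace - (Δ x * y).trace =
      (Δ y * x).trace - (Δ y * y).trace := by
    rw [← Matrix.trace_sub, ← Matrix.trace_sub, ← Matrix.mul_sub, ← Matrix.mul_sub]
    exact t1
  have e2 : (Δ x * x).trace + (Δ x * y).trace =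
      -((Δ y * x).trace + (Δ y * y).trace) := by
    rw [← Matrix.trace_add, ← Matrix.trace_add, ← Matrix.mul_add, ← Matrix.mul_add]
    exact t2
  linear_combination (e2 - e1) / 2

private lemma w2l_trace_ext {E : Matrix (Fin n) (Fin n) ℂ}
    (hE : ∀ v, (E * v).trace = 0) : E = 0 := by
  ext i j
  have h := hE (Matrix.single j i 1)
  have hcalc : (E * Matrix.single j i 1).trace = E i j := by
    simp only [Matrix.trace, Matrix.diag, Matrix.mul_apply, Matrix.single,
      Matrix.of_apply, mul_ite, mul_one, mul_zero, ite_and]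
    simp [Finset.sum_ite_eq, Finset.sum_ite_eq']
  rw [hcalc] at h
  simpa using h

/-- Additivity of a weak-2-local *-derivation. -/
private lemma w2l_add {Δ : Matrix (Fin n) (Fin n) ℂ → Matrix (Fin n) (Fin n) ℂ}
    (hΔ : IsWeak2LocalStarDerivation Δ) (x y : Matrix (Fin n) (Fin n) ℂ) :
    Δ (x + y) = Δ x + Δ y := by
  have key : ∀ v, ((Δ (x + y) - (Δ x + Δ y)) * v).trace = 0 := by
    intro v
    have h1 := w2l_antisym hΔ (x + y) v
    have h2 := w2l_antisym hΔ x v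
    have h3 := w2l_antisym hΔ y v
    have h4 : (Δ v * (x + y)).trace = (Δ v * x).trace + (Δ v * y).trace := by
      rw [Matrix.mul_add, Matrix.trace_add]
    rw [Matrix.sub_mul, Matrix.trace_sub, Matrix.add_mul, Matrix.trace_add]
    rw [h1, h2, h3, h4]
    ring
  have h0 := w2l_trace_ext key
  exact sub_eq_zero.mp h0

/-- Homogeneity of a weak-2-local *-derivation. -/
private lemma w2l_smul {Δ : Matrix (Fin n) (Fin n) ℂ → Matrix (Fin n) (Fin n) ℂ}
    (hΔ : IsWeak2LocalStarDerivation Δ) (c : ℂ) (x : Matrix (Fin n) (Fin n) ℂ) :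
    Δ (c • x) = c • Δ x := by
  have key : ∀ v, ((Δ (c • x) - c • Δ x) * v).trace = 0 := by
    intro v
    obtain ⟨D, hLeib, -, h1, h2⟩ := hΔ (c • x) x (w2l_phi v)
    rw [w2l_phi_apply, w2l_phi_apply] at h1 h2
    rw [Matrix.sub_mul, Matrix.trace_sub, Matrix.smul_mul, Matrix.trace_smul, smul_eq_mul]
    rw [h1, h2, map_smul, Matrix.smul_mul, Matrix.trace_smul, smul_eq_mul]
    ring
  have h0 := w2l_trace_ext key
  have := sub_eq_zero.mp h0
  exact this

private lemma w2l_zero {Δ : Matrix (Fin n) (Fin n) ℂ → Matrix (Fin n) (Fin n) ℂ}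
    (hΔ : IsWeak2LocalStarDerivation Δ) : Δ 0 = 0 := by
  have := w2l_smul hΔ 0 0
  simpa using this

private lemma w2l_sum {Δ : Matrix (Fin n) (Fin n) ℂ → Matrix (Fin n) (Fin n) ℂ}
    (hΔ : IsWeak2LocalStarDerivation Δ) {ι : Type*} (s : Finset ι)
    (f : ι → Matrix (Fin n) (Fin n) ℂ) :
    Δ (∑ j ∈ s, f j) = ∑ j ∈ s, Δ (f j) := by
  induction s using Finset.cons_induction with
  | empty => simpa using w2l_zero hΔ
  | cons a s ha ih => rw [Finset.sum_cons, w2l_add hΔ, ih, Finset.sum_cons]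

end AuxW2L

/-- For a weak-2-local *-derivation `Δ` on `Mₙ(ℂ)`, mutually orthogonal minimal projections
`p₁, …, pₙ`, `q = p₁ + ⋯ + p_{n-1}`, real scalars `λⱼ` and self-adjoint
`a = q a pₙ + pₙ a q`, one has `Δ(∑ λⱼ pⱼ + a) = ∑ λⱼ Δ(pⱼ) + Δ(a)`; moreover `Δ` is
additive and real-homogeneous on the set of such self-adjoint elements `a`. -/
theorem weak2LocalStarDerivation_add_selfAdjoint_corner {n : ℕ} (hn : 2 ≤ n)
    (Δ : Matrix (Fin n) (Fin n) ℂ → Matrix (Fin n) (Fin n) ℂ)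
    (hΔ : IsWeak2LocalStarDerivation Δ)
    (p : Fin n → Matrix (Fin n) (Fin n) ℂ) (hmin : ∀ j, IsMinimalProjection (p j))
    (horth : ∀ i j, i ≠ j → p i * p j = 0)
    (q : Matrix (Fin n) (Fin n) ℂ)
    (hq : q = ∑ j ∈ Finset.univ.erase (⟨n - 1, by omega⟩ : Fin n), p j) :
    (∀ (l : Fin n → ℝ) (a : Matrix (Fin n) (Fin n) ℂ), star a = a →
        a = q * a * p ⟨n - 1, by omega⟩ + p ⟨n - 1, by omega⟩ * a * q →
          Δ (∑ j, (l j : ℂ) • p j + a) = ∑ j, (l j : ℂ) • Δ (p j) + Δ a) ∧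
    (∀ a b : Matrix (Fin n) (Fin n) ℂ, star a = a → star b = b →
        a = q * a * p ⟨n - 1, by omega⟩ + p ⟨n - 1, by omega⟩ * a * q →
        b = q * b * p ⟨n - 1, by omega⟩ + p ⟨n - 1, by omega⟩ * b * q →
          Δ (a + b) = Δ a + Δ b) ∧
    (∀ (r : ℝ) (a : Matrix (Fin n) (Fin n) ℂ), star a = a →
        a = q * a * p ⟨n - 1, by omega⟩ + p ⟨n - 1, by omega⟩ * a * q →
          Δ ((r : ℂ) • a) = (r : ℂ) • Δ a) := by
  refine ⟨?_, ?_, ?_⟩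
  · intro l a _ _
    rw [w2l_add hΔ, w2l_sum hΔ]
    congr 1
    exact Finset.sum_congr rfl fun j _ => w2l_smul hΔ _ _
  · intro a b _ _ _ _
    exact w2l_add hΔ a b
  · intro r a _ _
    exact w2l_smul hΔ _ _
end

section
/- Let n be a positive natural number and let Δ : Mₙ(ℂ) → Mₙ(ℂ) be a weak-2-local *-derivation. Then Δ is bounded on the set of projections of Mₙ(ℂ): there exists a constant C ≥ 0 such that ‖Δ(p)‖ ≤ C for every projection p in Mₙ(ℂ) (p = p* = p²), where ‖·‖ denotes the operator norm. -/
open scoped Matrix.Norms.L2Operator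

open Matrix

section Aux

variable {n : ℕ}


noncomputable def phi (y : Matrix (Fin n) (Fin n) ℂ) : Matrix (Fin n) (Fin n) ℂ →L[ℂ] ℂ :=
  LinearMap.toContinuousLinearMap
    { toFun := fun x => (y * x).trace
      map_add' := by intro a b; simp [Matrix.mul_add]
      map_smul' := by intro c a; simp [Matrix.mul_smul] }

@[simp] lemma phi_apply (y x : Matrix (Fin n) (Fin n) ℂ) : phi y x = (y * x).trace := rfl

lemma trace_D_zero (D : Matrix (Fin n) (Fin n) ℂ →ₗ[ℂ] Matrix (Fin n) (Fin n) ℂ)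
    (hD : ∀ x y, D (x * y) = D x * y + x * D y) (z : Matrix (Fin n) (Fin n) ℂ) :
    (D z).trace = 0 := by
  have idem : ∀ e : Matrix (Fin n) (Fin n) ℂ, e * e = e → (D e).trace = 0 := by
    intro e he
    have h1 : D e = D e * e + e * D e := by
      conv_lhs => rw [← he, hD]
    have key : (e * D e).trace = 0 := by
      have h6 : (e * D e).trace = (e * D e).trace + (e * D e).trace := by
        conv_lhs => rw [h1, mul_add]
        rw [trace_add]
        congr 1
        · rw [← mul_assoc, trace_mul_comm, ← mul_assoc, he]
        · rw [← mul_assoc, he]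
      exact (left_eq_add.mp h6)
    have key2 : (D e * e).trace = 0 := by rw [trace_mul_comm]; exact key
    rw [h1, trace_add, key, key2, add_zero]
  have comm : ∀ x y : Matrix (Fin n) (Fin n) ℂ, (D (x * y - y * x)).trace = 0 := by
    intro x y
    rw [map_sub, trace_sub, hD, hD, trace_add, trace_add,
      trace_mul_comm (D x) y, trace_mul_comm x (D y)]
    ring
  have basis : ∀ i j : Fin n, (D (Matrix.single i j (1 : ℂ))).trace = 0 := by
    intro i j
    by_cases h : i = j
    · subst h
      exact idem _ (by rw [single_mul_single_same, one_mul])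
    · have hrepr : Matrix.single i j (1 : ℂ) =
          Matrix.single i i 1 * Matrix.single i j 1 -
            Matrix.single i j 1 * Matrix.single i i 1 := by
        rw [single_mul_single_same, one_mul, single_mul_single_of_ne (1:ℂ) i j i (Ne.symm h) 1, sub_zero]
      rw [hrepr]
      exact comm _ _
  conv_lhs => rw [matrix_eq_sum_single z]
  rw [map_sum, trace_sum]
  refine Finset.sum_eq_zero fun i _ => ?_
  rw [map_sum, trace_sum]
  refine Finset.sum_eq_zero fun j _ => ?_
  have : Matrix.single i j (z i j) = (z i j) • Matrix.single i j (1 : ℂ) := by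
    rw [smul_single, smul_eq_mul, mul_one]
  rw [this, D.map_smul, trace_smul, basis, smul_zero]

lemma cube_trace (D : Matrix (Fin n) (Fin n) ℂ →ₗ[ℂ] Matrix (Fin n) (Fin n) ℂ)
    (hD : ∀ x y, D (x * y) = D x * y + x * D y) (c : Matrix (Fin n) (Fin n) ℂ) :
    (c * c * D c).trace = 0 := by
  have h0 : (D (c * (c * c))).trace = 0 := trace_D_zero D hD _
  rw [hD c (c * c), hD c c, trace_add, mul_add, trace_add] at h0
  have t1 : (D c * (c * c)).trace = (c * c * D c).trace := trace_mul_comm _ _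
  have t2 : (c * (D c * c)).trace = (c * c * D c).trace := by
    rw [← mul_assoc, trace_mul_comm, ← mul_assoc]
  have t3 : (c * (c * D c)).trace = (c * c * D c).trace := by rw [← mul_assoc]
  rw [t1, t2, t3] at h0
  have h3 : (3 : ℂ) * (c * c * D c).trace = 0 := by linear_combination h0
  have h4 : (3 : ℂ) ≠ 0 := by norm_num
  exact (mul_eq_zero.mp h3).resolve_left h4

lemma trace_stdBasisMatrix_mul (j k : Fin n) (A : Matrix (Fin n) (Fin n) ℂ) :
    (Matrix.single j k (1 : ℂ) * A).trace = A k j := by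
  rw [Matrix.trace, Finset.sum_eq_single j]
  · simp [Matrix.diag]
  · intro i _ hij
    simp [Matrix.diag, single_mul_apply_of_ne (1:ℂ) j k i i hij]
  · intro h; exact absurd (Finset.mem_univ j) h

lemma matrix_eq_zero_of_trace (A : Matrix (Fin n) (Fin n) ℂ)
    (h : ∀ y : Matrix (Fin n) (Fin n) ℂ, (y * A).trace = 0) : A = 0 := by
  ext k j
  have := h (Matrix.single j k 1)
  rwa [trace_stdBasisMatrix_mul] at this

lemma norm_stdBasisMatrix_le (k j : Fin n) : ‖Matrix.single k j (1 : ℂ)‖ ≤ 1 := by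
  have hstar : ∀ a b : Fin n,
      star (Matrix.single a b (1 : ℂ)) = Matrix.single b a (1 : ℂ) := by
    intro a b
    ext x y
    simp [Matrix.star_apply, Matrix.single, and_comm, apply_ite (star : ℂ → ℂ)]
  have hdiag : ∀ i : Fin n, ‖Matrix.single i i (1 : ℂ)‖ ≤ 1 := by
    intro i
    have h := CStarRing.norm_star_mul_self (x := Matrix.single i i (1 : ℂ))
    rw [hstar, single_mul_single_same, one_mul] at h
    nlinarith [norm_nonneg (Matrix.single i i (1 : ℂ))]
  have h := CStarRing.norm_star_mul_self (x := Matrix.single k j (1 : ℂ))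
  rw [hstar, single_mul_single_same, one_mul] at h
  nlinarith [norm_nonneg (Matrix.single k j (1 : ℂ)), hdiag j]

lemma proj_entry_le (p : Matrix (Fin n) (Fin n) ℂ) (hps : star p = p) (hpp : p * p = p)
    (a c : Fin n) : ‖p a c‖ ≤ 1 := by
  have hconj : ∀ x y : Fin n, p x y = star (p y x) := by
    intro x y
    conv_lhs => rw [← hps]
    simp [Matrix.star_apply]
  have hrow : ∀ i : Fin n, p i i = ((∑ d, Complex.normSq (p i d) : ℝ) : ℂ) := by
    intro i
    have h := congrFun (congrFun (congrArg (fun M => M) hpp) i) i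
    have h2 : (p * p) i i = p i i := congrFun (congrFun hpp i) i
    rw [Matrix.mul_apply] at h2
    have h3 : ∀ d : Fin n, p i d * p d i = ((Complex.normSq (p i d) : ℝ) : ℂ) := by
      intro d
      rw [hconj d i]
      exact Complex.mul_conj _
    rw [Finset.sum_congr rfl (fun d _ => h3 d)] at h2
    rw [← h2]
    push_cast
    rfl
  set t : ℝ := ∑ d, Complex.normSq (p a d) with ht
  have htn : 0 ≤ t := Finset.sum_nonneg fun d _ => Complex.normSq_nonneg _
  have hle : Complex.normSq (p a a) ≤ t :=
    Finset.single_le_sum (fun d _ => Complex.normSq_nonneg (p a d)) (Finset.mem_univ a)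
  have hsq : Complex.normSq (p a a) = t ^ 2 := by
    rw [hrow a, Complex.normSq_ofReal]; ring
  have ht1 : t ≤ 1 := by nlinarith
  have hc : Complex.normSq (p a c) ≤ t :=
    Finset.single_le_sum (fun d _ => Complex.normSq_nonneg (p a d)) (Finset.mem_univ c)
  have : ‖p a c‖ ^ 2 ≤ 1 := by
    rw [Complex.sq_norm]
    exact le_trans hc ht1
  nlinarith [norm_nonneg (p a c)]


/-- Every weak-2-local *-derivation on `Mₙ(ℂ)` is bounded on the set of projections, with
respect to the operator norm. -/
theorem weak2LocalStarDerivation_bounded_on_projections {n : ℕ} (hn : 0 < n)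
    (Δ : Matrix (Fin n) (Fin n) ℂ → Matrix (Fin n) (Fin n) ℂ)
    (hΔ : IsWeak2LocalStarDerivation Δ) :
    ∃ C : ℝ, 0 ≤ C ∧ ∀ p : Matrix (Fin n) (Fin n) ℂ,
      star p = p → p * p = p → ‖Δ p‖ ≤ C := by
  classical
  refine ⟨∑ j : Fin n, ∑ k : Fin n, ∑ a : Fin n, ∑ c : Fin n,
      ‖(Δ (Matrix.single j k (1:ℂ))) c a‖, by positivity, ?_⟩
  intro p hps hpp
  -- the "corner" identity `Δp·p + p·Δp = Δp`
  have corner : Δ p * p + p * Δ p = Δ p := by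
    have key : ∀ y : Matrix (Fin n) (Fin n) ℂ,
        (y * (Δ p * p + p * Δ p - Δ p)).trace = 0 := by
      intro y
      obtain ⟨D, hD, -, h1, -⟩ := hΔ p p (phi (p * y + y * p - y))
      simp only [phi_apply] at h1
      have hDp : D p * p + p * D p = D p := by
        conv_rhs => rw [← hpp, hD]
      have move : ∀ X : Matrix (Fin n) (Fin n) ℂ,
          ((p * y + y * p - y) * X).trace = (y * (X * p + p * X - X)).trace := by
        intro X
        simp only [add_mul, sub_mul, mul_add, mul_sub, trace_add, trace_sub]
        rw [mul_assoc p y X, trace_mul_comm p (y * X), mul_assoc y X p, mul_assoc y p X]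
        all_goals ring
      have e2 := move (Δ p)
      have e3 := move (D p)
      rw [h1, e3] at e2
      rw [← e2, sub_eq_zero.mpr hDp, mul_zero, trace_zero]
    have hz : Δ p * p + p * Δ p - Δ p = 0 := matrix_eq_zero_of_trace _ key
    exact sub_eq_zero.mp hz
  -- the master identity coming from the weak-2-local property
  have master : ∀ (b : Matrix (Fin n) (Fin n) ℂ) (β : ℂ),
      ((p - β • b) * (p - β • b) * Δ p).trace
        = β * ((p - β • b) * (p - β • b) * Δ b).trace := by
    intro b β
    obtain ⟨D, hD, -, h1, h2⟩ := hΔ p b (phi ((p - β • b) * (p - β • b)))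
    simp only [phi_apply] at h1 h2
    rw [h1, h2]
    have hz := cube_trace D hD (p - β • b)
    rw [map_sub, D.map_smul, mul_sub, mul_smul_comm, trace_sub, trace_smul, smul_eq_mul] at hz
    linear_combination hz
  -- quadratic expansion of the master identity
  have expand : ∀ (b X : Matrix (Fin n) (Fin n) ℂ) (β : ℂ),
      ((p - β • b) * (p - β • b) * X).trace
        = (p * (p * X)).trace - β * ((p * (b * X)).trace + (b * (p * X)).trace)
            + β * β * (b * (b * X)).trace := by
    intro b X β
    have hc : (p - β • b) * (p - β • b)
        = p * p - β • (p * b) - (β • (b * p) - (β * β) • (b * b)) := by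
      rw [sub_mul, mul_sub, mul_sub, mul_smul_comm, smul_mul_assoc, smul_mul_assoc,
        mul_smul_comm, smul_smul]
    rw [hc]
    simp only [sub_mul, smul_mul_assoc, trace_sub, trace_smul, smul_eq_mul, mul_assoc]
    ring
  -- the entry formula
  have entry : ∀ j k : Fin n,
      (Δ p) k j = -(p * Δ (Matrix.single j k (1:ℂ))).trace := by
    intro j k
    set b := Matrix.single j k (1:ℂ) with hb
    have eq : ∀ β : ℂ,
        (p * (p * Δ p)).trace - β * ((p * (b * Δ p)).trace + (b * (p * Δ p)).trace)
            + β * β * (b * (b * Δ p)).trace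
          = β * ((p * (p * Δ b)).trace - β * ((p * (b * Δ b)).trace + (b * (p * Δ b)).trace)
            + β * β * (b * (b * Δ b)).trace) := by
      intro β
      rw [← expand b (Δ p) β, ← expand b (Δ b) β]
      exact master b β
    have u0 : (p * (b * Δ p)).trace + (b * (p * Δ p)).trace + (p * (p * Δ b)).trace = 0 := by
      linear_combination (2/3 : ℂ) * eq (-1) - (2/3 : ℂ) * eq 1 - (1/12 : ℂ) * eq (-2)
        + (1/12 : ℂ) * eq 2
    have e1 : (Δ p) k j = (b * Δ p).trace := (trace_stdBasisMatrix_mul j k (Δ p)).symm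
    have e2 : (b * Δ p).trace = (p * (b * Δ p)).trace + (b * (p * Δ p)).trace := by
      conv_lhs => rw [← corner]
      rw [mul_add, trace_add]
      congr 1
      rw [← mul_assoc, trace_mul_comm]
    have e3 : (p * (p * Δ b)).trace = (p * Δ b).trace := by rw [← mul_assoc, hpp]
    rw [e3] at u0
    rw [e1, e2]
    linear_combination u0
  -- trace bound against entries
  have tracebound : ∀ X : Matrix (Fin n) (Fin n) ℂ,
      ‖(p * X).trace‖ ≤ ∑ a : Fin n, ∑ c : Fin n, ‖X c a‖ := by
    intro X
    rw [Matrix.trace]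
    refine (norm_sum_le _ _).trans (Finset.sum_le_sum fun a _ => ?_)
    have hd : (p * X).diag a = ∑ c, p a c * X c a := by
      rw [Matrix.diag, Matrix.mul_apply]
    rw [hd]
    refine (norm_sum_le _ _).trans (Finset.sum_le_sum fun c _ => ?_)
    rw [norm_mul]
    calc ‖p a c‖ * ‖X c a‖ ≤ 1 * ‖X c a‖ :=
      mul_le_mul_of_nonneg_right (proj_entry_le p hps hpp a c) (norm_nonneg _)
    _ = ‖X c a‖ := one_mul _
  -- assemble
  calc ‖Δ p‖ ≤ ∑ k : Fin n, ∑ j : Fin n, ‖(Δ p) k j‖ := by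
        conv_lhs => rw [matrix_eq_sum_single (Δ p)]
        refine (norm_sum_le _ _).trans (Finset.sum_le_sum fun k _ => ?_)
        refine (norm_sum_le _ _).trans (Finset.sum_le_sum fun j _ => ?_)
        have h1 : Matrix.single k j ((Δ p) k j) = ((Δ p) k j) • Matrix.single k j (1:ℂ) := by
          rw [smul_single, smul_eq_mul, mul_one]
        rw [h1, norm_smul]
        calc ‖(Δ p) k j‖ * ‖Matrix.single k j (1:ℂ)‖ ≤ ‖(Δ p) k j‖ * 1 :=
          mul_le_mul_of_nonneg_left (norm_stdBasisMatrix_le k j) (norm_nonneg _)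
        _ = _ := mul_one _
  _ ≤ ∑ k : Fin n, ∑ j : Fin n, ∑ a : Fin n, ∑ c : Fin n,
        ‖(Δ (Matrix.single j k (1:ℂ))) c a‖ := by
        refine Finset.sum_le_sum fun k _ => Finset.sum_le_sum fun j _ => ?_
        rw [entry j k, norm_neg]
        exact tracebound _
  _ = ∑ j : Fin n, ∑ k : Fin n, ∑ a : Fin n, ∑ c : Fin n,
        ‖(Δ (Matrix.single j k (1:ℂ))) c a‖ := Finset.sum_comm
end Aux
end
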